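/- Let G be a d-regular graph with an even number of vertices and let (R,B) be a balanced colouring of G. Then P_2(B) ≥ P_2(R)² and P_2(R) ≥ P_2(B)²; that is, the pair (P_2(R),P_2(B)) lies in the region {(x,y) ∈ [0,1]² : y ≥ x² and x ≥ y²}. -/

import Mathlib

open Finset
open scoped Classical

/-- The number of neighbours of `v` lying in `R` (the degree of `v` into `R`). -/
noncomputable def degIn {V : Type*} (G : SimpleGraph V) (R : Finset V) (v : V) : ℕ :=
  (R.filter (fun w => G.Adj v w)).card

/-- `P₂(R)`: the probability that a random walk started at a uniform vertex of `R`
stays in `R` for two steps, in a `d`-regular graph. -/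
noncomputable def P2 {V : Type*} (G : SimpleGraph V) (d : ℕ) (R : Finset V) : ℝ :=
  (∑ v ∈ R, (degIn G R v : ℝ) ^ 2) / (R.card * d ^ 2)

lemma degIn_le {V : Type*} [Fintype V] {G : SimpleGraph V} {d : ℕ}
    (hreg : G.IsRegularOfDegree d) (R : Finset V) (v : V) : degIn G R v ≤ d := by
  have h : R.filter (fun w => G.Adj v w) ⊆ G.neighborFinset v := by
    intro w hw
    rw [SimpleGraph.mem_neighborFinset]
    exact (mem_filter.mp hw).2
  calc degIn G R v ≤ (G.neighborFinset v).card := card_le_card h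
    _ = d := hreg v

lemma degIn_add {V : Type*} [Fintype V] {G : SimpleGraph V} {d : ℕ}
    (hreg : G.IsRegularOfDegree d) {R B : Finset V} (hcov : ∀ v, v ∈ R ∨ v ∈ B)
    (hdisj : Disjoint R B) (v : V) : degIn G R v + degIn G B v = d := by
  unfold degIn
  have hU : R ∪ B = univ := by
    apply eq_univ_of_forall
    intro w
    rcases hcov w with h | h
    · exact mem_union_left _ h
    · exact mem_union_right _ h
  rw [← card_union_of_disjoint (disjoint_filter_filter hdisj), ← filter_union, hU]
  have : univ.filter (fun w => G.Adj v w) = G.neighborFinset v := by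
    ext w; simp [SimpleGraph.mem_neighborFinset]
  rw [this]
  exact hreg v

lemma sum_degIn_swap {V : Type*} [Fintype V] (G : SimpleGraph V) (R B : Finset V) :
    ∑ v ∈ R, degIn G B v = ∑ w ∈ B, degIn G R w := by
  simp only [degIn, card_filter]
  rw [Finset.sum_comm]
  apply sum_congr rfl
  intro w _
  apply sum_congr rfl
  intro v _
  rw [SimpleGraph.adj_comm]

lemma sum_degIn_eq {V : Type*} [Fintype V] {G : SimpleGraph V} {d : ℕ}
    (hreg : G.IsRegularOfDegree d) {R B : Finset V} (hcov : ∀ v, v ∈ R ∨ v ∈ B)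
    (hdisj : Disjoint R B) (hbal : R.card = B.card) :
    ∑ v ∈ R, degIn G R v = ∑ w ∈ B, degIn G B w := by
  have h1 : ∑ v ∈ R, degIn G R v + ∑ v ∈ R, degIn G B v = R.card * d := by
    rw [← Finset.sum_add_distrib]
    rw [Finset.sum_congr rfl fun v _ => degIn_add hreg hcov hdisj v]
    simp [mul_comm]
  have h2 : ∑ w ∈ B, degIn G B w + ∑ w ∈ B, degIn G R w = B.card * d := by
    have hcov' : ∀ v, v ∈ B ∨ v ∈ R := fun v => (hcov v).symm
    rw [← Finset.sum_add_distrib]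
    rw [Finset.sum_congr rfl fun v _ => degIn_add hreg hcov' hdisj.symm v]
    simp [mul_comm]
  have h3 := sum_degIn_swap G R B
  rw [← hbal] at h2
  omega

lemma P2_nonneg {V : Type*} (G : SimpleGraph V) (d : ℕ) (R : Finset V) :
    0 ≤ P2 G d R := by
  unfold P2; positivity

lemma P2_le_one {V : Type*} [Fintype V] {G : SimpleGraph V} {d : ℕ}
    (hreg : G.IsRegularOfDegree d) (R : Finset V) : P2 G d R ≤ 1 := by
  unfold P2
  rcases eq_or_lt_of_le (Nat.zero_le (R.card * d ^ 2)) with h | h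
  · have h0 : (R.card : ℝ) * (d : ℝ) ^ 2 = 0 := by exact_mod_cast h.symm
    rw [h0, div_zero]; norm_num
  · have hpos : (0:ℝ) < (R.card : ℝ) * (d : ℝ) ^ 2 := by exact_mod_cast h
    rw [div_le_one hpos]
    calc ∑ v ∈ R, (degIn G R v : ℝ) ^ 2 ≤ ∑ _v ∈ R, (d : ℝ) ^ 2 := by
          apply sum_le_sum
          intro v _
          have hc : (degIn G R v : ℝ) ≤ d := by exact_mod_cast degIn_le hreg R v
          exact pow_le_pow_left₀ (by positivity) hc 2
      _ = R.card * d ^ 2 := by simp [mul_comm]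

lemma key {V : Type*} [Fintype V] {G : SimpleGraph V} {d : ℕ}
    (hreg : G.IsRegularOfDegree d) {R B : Finset V} (hcov : ∀ v, v ∈ R ∨ v ∈ B)
    (hdisj : Disjoint R B) (hbal : R.card = B.card) :
    P2 G d R ^ 2 ≤ P2 G d B := by
  rcases Nat.eq_zero_or_pos R.card with hm | hm
  · have : P2 G d R = 0 := by
      unfold P2
      rw [Finset.card_eq_zero.mp hm]
      simp
    rw [this]
    simpa using P2_nonneg G d B
  rcases Nat.eq_zero_or_pos d with hd | hd
  · have : P2 G d R = 0 := by
      unfold P2; subst hd; norm_num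
    rw [this]
    simpa using P2_nonneg G d B
  have hmR : (0:ℝ) < R.card := by exact_mod_cast hm
  have hmB : (0:ℝ) < B.card := by rw [← hbal]; exact hmR
  have hdR : (0:ℝ) < d := by exact_mod_cast hd
  set S : ℝ := ∑ v ∈ R, (degIn G R v : ℝ) with hS
  have hSnn : 0 ≤ S := by positivity
  have hSB : ∑ w ∈ B, (degIn G B w : ℝ) = S := by
    rw [hS]
    exact_mod_cast (sum_degIn_eq hreg hcov hdisj hbal).symm
  -- P2 R ≤ S / (card * d)
  have h1 : P2 G d R ≤ S / (R.card * d) := by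
    unfold P2
    have hA : ∑ v ∈ R, (degIn G R v : ℝ) ^ 2 ≤ S * d := by
      rw [hS, Finset.sum_mul]
      apply sum_le_sum
      intro v _
      have hle : (degIn G R v : ℝ) ≤ d := by exact_mod_cast degIn_le hreg R v
      have h0 : (0:ℝ) ≤ (degIn G R v : ℝ) := by positivity
      nlinarith
    calc (∑ v ∈ R, (degIn G R v : ℝ) ^ 2) / (R.card * d ^ 2)
        ≤ (S * d) / (R.card * d ^ 2) := by gcongr
      _ = S / (R.card * d) := by field_simp
  have h2 : (S / (R.card * d)) ^ 2 ≤ P2 G d B := by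
    unfold P2
    rw [div_pow, div_le_div_iff₀ (by positivity) (by positivity)]
    have hCS : S ^ 2 ≤ B.card * ∑ w ∈ B, (degIn G B w : ℝ) ^ 2 := by
      rw [← hSB]
      have := Finset.sum_mul_sq_le_sq_mul_sq B (fun _ => (1:ℝ)) (fun w => (degIn G B w : ℝ))
      simpa using this
    rw [hbal] at *
    nlinarith [mul_le_mul_of_nonneg_right hCS (by positivity : (0:ℝ) ≤ (B.card:ℝ) * d ^ 2)]
  calc P2 G d R ^ 2 ≤ (S / (R.card * d)) ^ 2 := by
        gcongr
        exact P2_nonneg G d R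
    _ ≤ P2 G d B := h2

/-- For any `d`-regular graph with an even number of vertices and any balanced colouring
`(R,B)`: `P₂(B) ≥ P₂(R)²` and `P₂(R) ≥ P₂(B)²`, i.e. the pair `(P₂(R), P₂(B))` lies in
`{(x,y) ∈ [0,1]² : y ≥ x² and x ≥ y²}`. -/
theorem P2_pair_mem_parabola_region {V : Type*} [Fintype V] (G : SimpleGraph V) (d : ℕ)
    (hreg : G.IsRegularOfDegree d) (heven : Even (Fintype.card V))
    (R B : Finset V) (hcov : ∀ v, v ∈ R ∨ v ∈ B) (hdisj : Disjoint R B)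
    (hbal : R.card = B.card) :
    (P2 G d R, P2 G d B) ∈
      {p : ℝ × ℝ | p.1 ∈ Set.Icc (0 : ℝ) 1 ∧ p.2 ∈ Set.Icc (0 : ℝ) 1 ∧
        p.2 ≥ p.1 ^ 2 ∧ p.1 ≥ p.2 ^ 2} := by
  refine ⟨⟨P2_nonneg G d R, P2_le_one hreg R⟩, ⟨P2_nonneg G d B, P2_le_one hreg B⟩, ?_, ?_⟩
  · exact key hreg hcov hdisj hbal
  · exact key hreg (fun v => (hcov v).symm) hdisj.symm hbal.symm
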